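/- Let σ > 0 and ρ ∈ (0, 1). Define the modified Bessel function of the first kind of order u ∈ ℝ by I_u(w) = Σ_{k=0}^∞ (w/2)^{2k+u} / (Γ(k+u+1) k!), the gamma AR(1) transition density f(ν | x) = (1/(σ²(1−ρ))) (ν/(ρx))^{(σ^{-2}−1)/2} exp(−(ν + ρx)/(σ²(1−ρ))) I_{σ^{-2}−1}( 2√(ρνx)/(σ²(1−ρ)) ) for ν, x > 0, and the gamma density with shape σ^{-2} and rate σ^{-2}, g(x) = (σ^{-2})^{σ^{-2}} x^{σ^{-2}−1} exp(−x/σ²) / Γ(σ^{-2}) for x > 0. Then for every ν > 0, ∫_0^∞ f(ν | x) g(x) dx = g(ν); that is, the gamma distribution with shape and rate σ^{-2} is invariant for the transition kernel f. -/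

import Mathlib

open MeasureTheory Real

/-- Modified Bessel function of the first kind of order `u`, defined by its
power series `I_u(w) = Σ_{k} (w/2)^{2k+u} / (Γ(k+u+1) k!)`. -/
noncomputable def besselI (u w : ℝ) : ℝ :=
  ∑' k : ℕ, (w / 2) ^ (2 * (k : ℝ) + u) / (Real.Gamma ((k : ℝ) + u + 1) * (Nat.factorial k : ℝ))

/-- Transition density of the gamma AR(1) process of Sim (1990) with mean 1 and
variance `σ²`: density of `ν_t` at `ν` given `ν_{t-1} = x`. -/
noncomputable def garDensity (σ ρ x ν : ℝ) : ℝ :=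
  (1 / (σ ^ 2 * (1 - ρ))) * (ν / (ρ * x)) ^ (((σ ^ 2)⁻¹ - 1) / 2)
    * Real.exp (-(ν + ρ * x) / (σ ^ 2 * (1 - ρ)))
    * besselI ((σ ^ 2)⁻¹ - 1) (2 * Real.sqrt (ρ * ν * x) / (σ ^ 2 * (1 - ρ)))

/-- Density of the gamma distribution with shape `σ⁻²` and rate `σ⁻²`. -/
noncomputable def gammaStationaryDensity (σ x : ℝ) : ℝ :=
  ((σ ^ 2)⁻¹) ^ ((σ ^ 2)⁻¹) * x ^ ((σ ^ 2)⁻¹ - 1) * Real.exp (-x / σ ^ 2)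
    / Real.Gamma ((σ ^ 2)⁻¹)

/-- The gamma distribution with shape and rate both `σ⁻²` is invariant for the
gamma AR(1) transition kernel: `∫_0^∞ f(ν | x) g(x) dx = g(ν)` for every `ν > 0`. -/
theorem rpow_combine {ρ ν x c : ℝ} (hρ : 0 < ρ) (hν : 0 < ν) (hx : 0 < x) (hc : 0 < c) (k : ℕ) (a : ℝ) :
    (ν / (ρ * x)) ^ ((a - 1) / 2) * (Real.sqrt (ρ * ν * x) * c) ^ (2 * (k:ℝ) + a - 1) * x ^ (a - 1)
      = c ^ (2 * (k:ℝ) + a - 1) * ρ ^ (k:ℝ) * ν ^ ((k:ℝ) + a - 1) * x ^ ((k:ℝ) + a - 1) := by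
  have p1 : (0:ℝ) < ν / (ρ * x) := by positivity
  have p2 : (0:ℝ) < Real.sqrt (ρ * ν * x) * c := by positivity
  have p3 : (0:ℝ) ≤ ρ * ν * x := by positivity
  have h1 : (0:ℝ) < (ν / (ρ * x)) ^ ((a - 1) / 2) * (Real.sqrt (ρ * ν * x) * c) ^ (2 * (k:ℝ) + a - 1) * x ^ (a - 1) := by positivity
  have h2 : (0:ℝ) < c ^ (2 * (k:ℝ) + a - 1) * ρ ^ (k:ℝ) * ν ^ ((k:ℝ) + a - 1) * x ^ ((k:ℝ) + a - 1) := by positivity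
  rw [← Real.exp_log h1, ← Real.exp_log h2]
  congr 1
  rw [Real.log_mul (by positivity) (by positivity), Real.log_mul (by positivity) (by positivity),
    Real.log_rpow p1, Real.log_rpow p2, Real.log_rpow hx,
    Real.log_mul (Real.sqrt_ne_zero'.mpr (by positivity)) hc.ne', Real.log_sqrt p3,
    Real.log_mul (by positivity) hx.ne', Real.log_mul hρ.ne' hν.ne',
    Real.log_div hν.ne' (by positivity), Real.log_mul hρ.ne' hx.ne',
    Real.log_mul (by positivity) (by positivity), Real.log_mul (by positivity) (by positivity),
    Real.log_mul (by positivity) (by positivity),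
    Real.log_rpow hc, Real.log_rpow hρ, Real.log_rpow hν, Real.log_rpow hx]
  ring

theorem garDensity_gamma_invariant (σ ρ : ℝ) (hσ : 0 < σ) (hρ : ρ ∈ Set.Ioo (0 : ℝ) 1)
    (ν : ℝ) (hν : 0 < ν) :
    ∫ x in Set.Ioi (0 : ℝ), garDensity σ ρ x ν * gammaStationaryDensity σ x
      = gammaStationaryDensity σ ν := by
  obtain ⟨hρ0, hρ1⟩ := hρ
  have hσ2 : (0:ℝ) < σ ^ 2 := by positivity
  have h1ρ : (0:ℝ) < 1 - ρ := by linarith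
  set a : ℝ := (σ ^ 2)⁻¹ with ha_def
  set c : ℝ := (σ ^ 2 * (1 - ρ))⁻¹ with hc_def
  have ha : 0 < a := by positivity
  have hc : 0 < c := by positivity
  have hΓa : 0 < Real.Gamma a := Real.Gamma_pos_of_pos ha
  have hkey : c * ρ + a = c := by
    rw [ha_def, hc_def]
    field_simp
    ring
  set F : ℕ → ℝ → ℝ := fun k x =>
    (c ^ (2 * (k:ℝ) + a) * ρ ^ (k:ℝ) * ν ^ ((k:ℝ) + a - 1) * Real.exp (-(c * ν)) * a ^ a /
      (Real.Gamma ((k:ℝ) + a) * (Nat.factorial k : ℝ) * Real.Gamma a))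
      * (x ^ ((k:ℝ) + a - 1) * Real.exp (-(c * x))) with hF_def
  -- pointwise expansion of the integrand into a series
  have hpt : ∀ x ∈ Set.Ioi (0:ℝ),
      garDensity σ ρ x ν * gammaStationaryDensity σ x = ∑' k, F k x := by
    intro x hx
    have hx0 : (0:ℝ) < x := hx
    simp only [garDensity, gammaStationaryDensity, besselI, ← ha_def]
    rw [← tsum_mul_left, ← tsum_mul_right]
    refine tsum_congr fun k => ?_
    have e1 : (1:ℝ)/(σ^2*(1-ρ)) = c := by rw [hc_def, one_div]
    have e2 : -(ν + ρ*x)/(σ^2*(1-ρ)) = -(c*ν) + -(c*(ρ*x)) := by rw [hc_def]; ring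
    have e4 : 2*Real.sqrt (ρ*ν*x)/(σ^2*(1-ρ))/2 = Real.sqrt (ρ*ν*x)*c := by rw [hc_def]; ring
    have e3 : -x/σ^2 = -(a*x) := by rw [ha_def]; ring
    rw [e1, e2, e4, e3, show 2*(k:ℝ) + (a-1) = 2*(k:ℝ) + a - 1 by ring,
      show (k:ℝ) + (a-1) + 1 = (k:ℝ) + a by ring, Real.exp_add]
    have key := rpow_combine hρ0 hν hx0 hc k a
    have ec : c ^ (2*(k:ℝ) + a) = c ^ (2*(k:ℝ) + a - 1) * c := by
      rw [← Real.rpow_add_one hc.ne']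
      congr 1
      ring
    have ee : Real.exp (-(c*(ρ*x))) * Real.exp (-(a*x)) = Real.exp (-(c*x)) := by
      rw [← Real.exp_add]
      congr 1
      linear_combination (-x) * hkey
    simp only [hF_def]
    rw [ec]
    linear_combination (c * Real.exp (-(c*ν)) * a^a /
        (Real.Gamma ((k:ℝ)+a) * (Nat.factorial k : ℝ) * Real.Gamma a)) *
      (Real.exp (-(c*(ρ*x))) * Real.exp (-(a*x)) * key
        + (c^(2*(k:ℝ)+a-1) * ρ^(k:ℝ) * ν^((k:ℝ)+a-1) * x^((k:ℝ)+a-1)) * ee)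
  -- integrability of each term
  have hbase : ∀ k : ℕ, IntegrableOn (fun x : ℝ => x ^ ((k:ℝ)+a-1) * Real.exp (-(c*x)))
      (Set.Ioi (0:ℝ)) := by
    intro k
    have hk : (0:ℝ) ≤ (k:ℝ) := Nat.cast_nonneg k
    have := integrableOn_rpow_mul_exp_neg_mul_rpow
      (show (-1:ℝ) < (k:ℝ)+a-1 by linarith) zero_lt_one hc
    simpa [Real.rpow_one] using this
  have hintg : ∀ k : ℕ, IntegrableOn (F k) (Set.Ioi (0:ℝ)) := by
    intro k
    exact (hbase k).const_mul _
  -- value of each integral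
  have hint : ∀ k : ℕ, (∫ x in Set.Ioi (0:ℝ), F k x)
      = (a ^ a * ν ^ (a - 1) * Real.exp (-(c * ν)) / Real.Gamma a)
          * ((c * ρ * ν) ^ k / (Nat.factorial k : ℝ)) := by
    intro k
    have hΓka : 0 < Real.Gamma ((k:ℝ) + a) := Real.Gamma_pos_of_pos (by positivity)
    simp only [hF_def]
    rw [MeasureTheory.integral_const_mul,
      integral_rpow_mul_exp_neg_mul_Ioi (show (0:ℝ) < (k:ℝ)+a by positivity) hc]
    have hcc : c^(2*(k:ℝ)+a) * (1/c)^((k:ℝ)+a) = c^k := by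
      rw [one_div, Real.inv_rpow hc.le, ← Real.rpow_neg hc.le, ← Real.rpow_add hc,
        show 2*(k:ℝ)+a + -((k:ℝ)+a) = ((k:ℕ):ℝ) by ring, Real.rpow_natCast]
    have hνν : ν^((k:ℝ)+a-1) = ν^k * ν^(a-1) := by
      rw [← Real.rpow_natCast ν k, ← Real.rpow_add hν]
      congr 1
      ring
    rw [hνν, Real.rpow_natCast ρ k, mul_pow, mul_pow]
    have hG : Real.Gamma ((k:ℝ)+a) * (Real.Gamma ((k:ℝ)+a))⁻¹ = 1 := mul_inv_cancel₀ hΓka.ne'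
    linear_combination (ρ^k * ν^k * ν^(a-1) * Real.exp (-(c*ν)) * a^a /
        ((Nat.factorial k : ℝ) * Real.Gamma a)) *
        (Real.Gamma ((k:ℝ)+a) * (Real.Gamma ((k:ℝ)+a))⁻¹ * hcc + c^k * hG)
  -- nonnegativity on Ioi 0
  have hFnn : ∀ (k : ℕ) (x : ℝ), x ∈ Set.Ioi (0:ℝ) → 0 ≤ F k x := by
    intro k x hx
    have hx0 : (0:ℝ) < x := hx
    have hΓka : 0 < Real.Gamma ((k:ℝ) + a) := Real.Gamma_pos_of_pos (by positivity)
    have hkf : (0:ℝ) < (Nat.factorial k : ℝ) := by positivity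
    simp only [hF_def]
    positivity
  have hnorm : ∀ k : ℕ, (∫ x in Set.Ioi (0:ℝ), ‖F k x‖)
      = ∫ x in Set.Ioi (0:ℝ), F k x := fun k =>
    setIntegral_congr_fun measurableSet_Ioi (fun x hx => Real.norm_of_nonneg (hFnn k x hx))
  have hsum : Summable fun k : ℕ => ∫ x in Set.Ioi (0:ℝ), ‖F k x‖ := by
    simp only [hnorm, hint]
    exact (Real.summable_pow_div_factorial (c*ρ*ν)).mul_left _
  -- put everything together
  rw [setIntegral_congr_fun measurableSet_Ioi hpt,
    ← MeasureTheory.integral_tsum_of_summable_integral_norm hintg hsum]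
  have hexp : Real.exp (-(c*ν)) * Real.exp (c*ρ*ν) = Real.exp (-ν/σ^2) := by
    rw [← Real.exp_add]
    congr 1
    have e3 : -ν/σ^2 = -(a*ν) := by rw [ha_def]; ring
    rw [e3]
    linear_combination ν * hkey
  calc (∑' k, ∫ x in Set.Ioi (0:ℝ), F k x)
      = ∑' k : ℕ, (a ^ a * ν ^ (a - 1) * Real.exp (-(c * ν)) / Real.Gamma a)
          * ((c * ρ * ν) ^ k / (Nat.factorial k : ℝ)) := tsum_congr hint
    _ = (a ^ a * ν ^ (a - 1) * Real.exp (-(c * ν)) / Real.Gamma a) * Real.exp (c*ρ*ν) := by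
        rw [tsum_mul_left, Real.exp_eq_exp_ℝ,
          (NormedSpace.expSeries_div_hasSum_exp (c*ρ*ν)).tsum_eq]
    _ = gammaStationaryDensity σ ν := by
        simp only [gammaStationaryDensity, ← ha_def]
        linear_combination (a^a * ν^(a-1) / Real.Gamma a) * hexp
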